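/- Let w > 0, a ∈ ℝ, and φ ∈ (0,1). For b ∈ ℝ define I₁(b) := η(φ·Q(−w·a) + (1−φ)·Q(−w·b)) + η(φ·Q(w·a) + (1−φ)·Q(w·b)) − φ·(η(Q(−w·a)) + η(Q(w·a))) − (1−φ)·(η(Q(−w·b)) + η(Q(w·b))), the binary-input mutual information of the one-bit-ADC real Gaussian channel with gain w and inputs a (probability φ) and b (probability 1−φ). Then I₁(b) converges, as b → ∞, to f_φ(Q(−w·a)) = h(φ·Q(w·a)) − φ·h(Q(−w·a)). -/
import Mathlib


open MeasureTheory Real Filter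

/-- The standard Gaussian tail function `Q(x) = ∫_x^∞ (2π)^{-1/2} e^{-u²/2} du`. -/
noncomputable def gaussQ (x : ℝ) : ℝ :=
  ∫ u in Set.Ioi x, (Real.sqrt (2 * Real.pi))⁻¹ * Real.exp (-u ^ 2 / 2)

/-- `η(t) = -t log t` (with `η(0) = 0`, automatic since `Real.log 0 = 0`). -/
noncomputable def eta (t : ℝ) : ℝ := -t * Real.log t

/-- The binary entropy function `h(p) = -p log p - (1-p) log (1-p)`. -/
noncomputable def binEnt (p : ℝ) : ℝ := eta p + eta (1 - p)

/-- `f_φ(p) = h(φ(1-p)) - φ·h(p)`. -/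
noncomputable def fphi (φ p : ℝ) : ℝ := binEnt (φ * (1 - p)) - φ * binEnt p

/-- Binary-input mutual information of the real Gaussian channel with gain `w`
followed by a one-bit ADC, with input `x₁` w.p. `φ` and `x₂` w.p. `1-φ`. -/
noncomputable def miOneBit (w φ x₁ x₂ : ℝ) : ℝ :=
  (eta (φ * gaussQ (-(w * x₁)) + (1 - φ) * gaussQ (-(w * x₂)))
      - φ * eta (gaussQ (-(w * x₁))) - (1 - φ) * eta (gaussQ (-(w * x₂))))
    + (eta (φ * gaussQ (w * x₁) + (1 - φ) * gaussQ (w * x₂))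
      - φ * eta (gaussQ (w * x₁)) - (1 - φ) * eta (gaussQ (w * x₂)))

lemma gpdf_integrable :
    Integrable (fun u : ℝ => (Real.sqrt (2 * Real.pi))⁻¹ * Real.exp (-u ^ 2 / 2)) := by
  have h : Integrable (fun u : ℝ => Real.exp (-(1/2 : ℝ) * u ^ 2)) :=
    integrable_exp_neg_mul_sq (by norm_num)
  have h2 : (fun u : ℝ => Real.exp (-u ^ 2 / 2)) = fun u : ℝ => Real.exp (-(1/2 : ℝ) * u ^ 2) := by
    funext u; ring_nf
  rw [show (fun u : ℝ => (Real.sqrt (2 * Real.pi))⁻¹ * Real.exp (-u ^ 2 / 2))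
      = fun u : ℝ => (Real.sqrt (2 * Real.pi))⁻¹ * Real.exp (-(1/2 : ℝ) * u ^ 2) from by
    funext u; rw [congrFun h2 u]]
  exact h.const_mul _

lemma gpdf_total :
    (∫ u : ℝ, (Real.sqrt (2 * Real.pi))⁻¹ * Real.exp (-u ^ 2 / 2)) = 1 := by
  have h : (∫ u : ℝ, Real.exp (-(1/2 : ℝ) * u ^ 2)) = Real.sqrt (Real.pi / (1/2)) :=
    integral_gaussian (1/2)
  have h2 : (∫ u : ℝ, (Real.sqrt (2 * Real.pi))⁻¹ * Real.exp (-u ^ 2 / 2))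
      = (Real.sqrt (2 * Real.pi))⁻¹ * ∫ u : ℝ, Real.exp (-(1/2 : ℝ) * u ^ 2) := by
    rw [← integral_const_mul]; congr 1; funext u; congr 1; ring
  rw [h2, h, show Real.pi / (1/2) = 2 * Real.pi by ring]
  rw [inv_mul_cancel₀]
  positivity

lemma gaussQ_neg (x : ℝ) : gaussQ (-x) = 1 - gaussQ x := by
  have hsym : gaussQ (-x)
      = ∫ u in Set.Iic x, (Real.sqrt (2 * Real.pi))⁻¹ * Real.exp (-u ^ 2 / 2) := by
    rw [gaussQ, ← integral_comp_neg_Iic x]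
    congr 1; funext u; ring_nf
  have hadd := intervalIntegral.integral_Iic_add_Ioi (b := x) gpdf_integrable.integrableOn
    gpdf_integrable.integrableOn
  rw [gpdf_total] at hadd
  rw [hsym, gaussQ]; linarith

lemma gaussQ_tendsto_zero : Tendsto gaussQ atTop (nhds 0) := by
  have h := intervalIntegral_tendsto_integral_Ioi 0
    gpdf_integrable.integrableOn (tendsto_id (α := ℝ))
  have key : ∀ᶠ b : ℝ in atTop, gaussQ 0
      - ∫ u in (0:ℝ)..b, (Real.sqrt (2 * Real.pi))⁻¹ * Real.exp (-u ^ 2 / 2) = gaussQ b := by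
    filter_upwards [eventually_ge_atTop (0:ℝ)] with b hb
    rw [intervalIntegral.integral_of_le hb, gaussQ, gaussQ]
    rw [← Set.Ioc_union_Ioi_eq_Ioi hb,
      setIntegral_union (Set.Ioc_disjoint_Ioi le_rfl) measurableSet_Ioi
        gpdf_integrable.integrableOn gpdf_integrable.integrableOn]
    ring
  have hval : (∫ x in Set.Ioi (0:ℝ), (Real.sqrt (2 * Real.pi))⁻¹ * Real.exp (-x ^ 2 / 2)) = gaussQ 0 := rfl
  rw [hval] at h
  have h2 := (tendsto_const_nhds (x := gaussQ 0) (f := atTop (α := ℝ))).sub h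
  rw [show gaussQ 0 - gaussQ 0 = 0 by ring] at h2
  exact h2.congr' key

lemma gaussQ_tendsto_one : Tendsto gaussQ atBot (nhds 1) := by
  have h : Tendsto (fun b : ℝ => 1 - gaussQ (-b)) atBot (nhds 1) := by
    have := (gaussQ_tendsto_zero.comp (tendsto_neg_atBot_atTop : Tendsto (fun b : ℝ => -b) atBot atTop))
    have h2 := (tendsto_const_nhds (x := (1:ℝ)) (f := atBot (α := ℝ))).sub this
    simpa using h2
  refine h.congr fun b => ?_
  rw [show b = -(-b) from (neg_neg b).symm, gaussQ_neg]; ring_nf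


lemma continuous_eta : Continuous eta := by
  unfold eta; simp only [neg_mul]; exact Real.continuous_mul_log.neg

lemma eta_zero : eta 0 = 0 := by simp [eta]
lemma eta_one : eta 1 = 0 := by simp [eta]

/-- As `b → ∞`, the one-bit-ADC binary-input mutual information `I₁(b)` with inputs
`a` (w.p. `φ`) and `b` (w.p. `1-φ`) converges to
`f_φ(Q(-w·a)) = h(φ·Q(w·a)) - φ·h(Q(-w·a))`. -/
theorem miOneBit_tendsto (w a φ : ℝ) (hw : 0 < w) (hφ : φ ∈ Set.Ioo (0 : ℝ) 1) :
    Tendsto (fun b : ℝ => miOneBit w φ a b) atTop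
        (nhds (fphi φ (gaussQ (-(w * a))))) ∧
      fphi φ (gaussQ (-(w * a)))
        = binEnt (φ * gaussQ (w * a)) - φ * binEnt (gaussQ (-(w * a))) := by
  set p := gaussQ (-(w * a)) with hp
  set q := gaussQ (w * a) with hq
  have hpq : p = 1 - q := gaussQ_neg (w * a)
  have heq : fphi φ p = binEnt (φ * q) - φ * binEnt p := by
    rw [fphi, show 1 - p = q by rw [hpq]; ring]
  constructor
  · -- limits of the two Q terms
    have hwb : Tendsto (fun b : ℝ => w * b) atTop atTop :=
      Tendsto.const_mul_atTop hw tendsto_id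
    have hQp : Tendsto (fun b : ℝ => gaussQ (w * b)) atTop (nhds 0) :=
      gaussQ_tendsto_zero.comp hwb
    have hQm : Tendsto (fun b : ℝ => gaussQ (-(w * b))) atTop (nhds 1) :=
      gaussQ_tendsto_one.comp (tendsto_neg_atTop_atBot.comp hwb)
    have h1 : Tendsto (fun b : ℝ => eta (φ * p + (1 - φ) * gaussQ (-(w * b)))) atTop
        (nhds (eta (φ * p + (1 - φ) * 1))) :=
      (continuous_eta.tendsto _).comp (tendsto_const_nhds.add (hQm.const_mul _))
    have h2 : Tendsto (fun b : ℝ => eta (gaussQ (-(w * b)))) atTop (nhds (eta 1)) :=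
      (continuous_eta.tendsto _).comp hQm
    have h3 : Tendsto (fun b : ℝ => eta (φ * q + (1 - φ) * gaussQ (w * b))) atTop
        (nhds (eta (φ * q + (1 - φ) * 0))) :=
      (continuous_eta.tendsto _).comp (tendsto_const_nhds.add (hQp.const_mul _))
    have h4 : Tendsto (fun b : ℝ => eta (gaussQ (w * b))) atTop (nhds (eta 0)) :=
      (continuous_eta.tendsto _).comp hQp
    have main : Tendsto (fun b : ℝ => miOneBit w φ a b) atTop
        (nhds ((eta (φ * p + (1 - φ) * 1) - φ * eta p - (1 - φ) * eta 1)
          + (eta (φ * q + (1 - φ) * 0) - φ * eta q - (1 - φ) * eta 0))) := by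
      unfold miOneBit
      exact ((h1.sub tendsto_const_nhds).sub (h2.const_mul _)).add
        ((h3.sub tendsto_const_nhds).sub (h4.const_mul _))
    have hV : (eta (φ * p + (1 - φ) * 1) - φ * eta p - (1 - φ) * eta 1)
          + (eta (φ * q + (1 - φ) * 0) - φ * eta q - (1 - φ) * eta 0)
        = fphi φ p := by
      rw [heq, eta_zero, eta_one, binEnt, binEnt,
        show φ * p + (1 - φ) * 1 = 1 - φ * q by rw [hpq]; ring,
        show φ * q + (1 - φ) * 0 = φ * q by ring,
        show 1 - p = q by rw [hpq]; ring]
      ring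
    rwa [hV] at main
  · exact heq
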